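/- The prolonged symbol σ₃(P₁) of the Rapcsák operator has rank (7n² − n)/2; precisely, the linear map σ₃(P₁) sending a symmetric trilinear form A on V to the pair of bilinear forms (B_S, B_C), where B_S(X,Y) := A(X, S, J Y) − A(X, Y, C) and B_C(X,Y) := A(X, Y, C), has image of dimension (7n² − n)/2. -/

import Mathlib

set_option synthInstance.maxHeartbeats 1000000
set_option maxHeartbeats 1000000

noncomputable section

/-- The pointwise model `V = (Fin n → ℝ) × (Fin n → ℝ)` of the double tangent space
`T_x(TM)` for a spray on an `n`-dimensional manifold, in an adapted basis. -/
abbrev V (n : ℕ) : Type := (Fin n → ℝ) × (Fin n → ℝ)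

/-- The vertical endomorphism `J (x, y) = (0, x)`. -/
def Jmap (n : ℕ) : V n →ₗ[ℝ] V n where
  toFun p := (0, p.1)
  map_add' a b := by simp
  map_smul' c a := by simp

/-- The horizontal projector `P_h (x, y) = (x, 0)`. -/
def Ph (n : ℕ) : V n →ₗ[ℝ] V n where
  toFun p := (p.1, 0)
  map_add' a b := by simp
  map_smul' c a := by simp

/-- The `j`-th standard basis vector of `Fin n → ℝ`, indexed by `1 ≤ j ≤ n`
(zero if `j` is out of range). -/
def dlt (n j : ℕ) : Fin n → ℝ := fun i => if (i : ℕ) + 1 = j then 1 else 0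

/-- The horizontal basis vector `h_j`, `1 ≤ j ≤ n`. -/
def hvec (n j : ℕ) : V n := (dlt n j, 0)

/-- The vertical basis vector `v_j`, `1 ≤ j ≤ n`. -/
def vvec (n j : ℕ) : V n := (0, dlt n j)

/-- The spray vector `S = h_n`. -/
def Svec (n : ℕ) : V n := hvec n n

/-- The Liouville vector `C = v_n = J S`. -/
def Cvec (n : ℕ) : V n := vvec n n

/-- Bilinear forms on `V n`. -/
abbrev Bil (n : ℕ) := V n →ₗ[ℝ] V n →ₗ[ℝ] ℝ

/-- Trilinear forms on `V n` (bundled). -/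
abbrev Tri (n : ℕ) := V n →ₗ[ℝ] V n →ₗ[ℝ] V n →ₗ[ℝ] ℝ

/-- The image of the prolonged symbol `σ₃(P₁)`: pairs `(B_S, B_C)` of bilinear forms
coming from a symmetric trilinear form `A` via `B_S(X,Y) = A(X, S, J Y) − A(X, Y, C)`
and `B_C(X,Y) = A(X, Y, C)`. -/
def sigma3P1Image (n : ℕ) : Submodule ℝ (Bil n × Bil n) where
  carrier := {B | ∃ A : Tri n,
    (∀ X Y Z, A X Y Z = A Y X Z) ∧ (∀ X Y Z, A X Y Z = A X Z Y) ∧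
    (∀ X Y, B.1 X Y = A X (Svec n) (Jmap n Y) - A X Y (Cvec n)) ∧
    (∀ X Y, B.2 X Y = A X Y (Cvec n))}
  add_mem' := by
    rintro a b ⟨A, hA1, hA2, hA3, hA4⟩ ⟨B, hB1, hB2, hB3, hB4⟩
    refine ⟨A + B, fun X Y Z => ?_, fun X Y Z => ?_, fun X Y => ?_, fun X Y => ?_⟩ <;>
      simp only [Prod.fst_add, Prod.snd_add, LinearMap.add_apply]
    · linear_combination hA1 X Y Z + hB1 X Y Z
    · linear_combination hA2 X Y Z + hB2 X Y Z
    · linear_combination hA3 X Y + hB3 X Y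
    · linear_combination hA4 X Y + hB4 X Y
  zero_mem' := ⟨0, fun X Y Z => by simp, fun X Y Z => by simp, fun X Y => by simp,
    fun X Y => by simp⟩
  smul_mem' := by
    rintro c a ⟨A, hA1, hA2, hA3, hA4⟩
    refine ⟨c • A, fun X Y Z => ?_, fun X Y Z => ?_, fun X Y => ?_, fun X Y => ?_⟩ <;>
      simp only [Prod.smul_fst, Prod.smul_snd, LinearMap.smul_apply, smul_eq_mul]
    · linear_combination c * hA1 X Y Z
    · linear_combination c * hA2 X Y Z
    · linear_combination c * hA3 X Y
    · linear_combination c * hA4 X Y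

open Finset in
section
namespace RankAux
abbrev ii (m : ℕ) := Fin (m+1) ⊕ Fin (m+1)
noncomputable def bV (m : ℕ) : Module.Basis (ii m) ℝ (V (m+1)) :=
  (Pi.basisFun ℝ (Fin (m+1))).prod (Pi.basisFun ℝ (Fin (m+1)))
lemma dlt_eq (m : ℕ) : dlt (m+1) (m+1) = Pi.single (Fin.last m) (1:ℝ) := by
  funext i
  rw [Pi.single_apply]
  simp only [dlt]
  exact if_congr (by rw [Fin.ext_iff, Fin.val_last]; omega) rfl rfl
lemma bV_inl (m : ℕ) (i : Fin (m+1)) : bV m (Sum.inl i) = (Pi.single i 1, 0) := by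
  have h1 := Module.Basis.prod_apply_inl_fst (Pi.basisFun ℝ (Fin (m+1))) (Pi.basisFun ℝ (Fin (m+1))) i
  have h2 := Module.Basis.prod_apply_inl_snd (Pi.basisFun ℝ (Fin (m+1))) (Pi.basisFun ℝ (Fin (m+1))) i
  rw [Pi.basisFun_apply] at h1
  exact Prod.ext h1 h2
lemma bV_inr (m : ℕ) (i : Fin (m+1)) : bV m (Sum.inr i) = (0, Pi.single i 1) := by
  have h1 := Module.Basis.prod_apply_inr_fst (Pi.basisFun ℝ (Fin (m+1))) (Pi.basisFun ℝ (Fin (m+1))) i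
  have h2 := Module.Basis.prod_apply_inr_snd (Pi.basisFun ℝ (Fin (m+1))) (Pi.basisFun ℝ (Fin (m+1))) i
  rw [Pi.basisFun_apply] at h2
  exact Prod.ext h1 h2
lemma hS (m : ℕ) : Svec (m+1) = bV m (Sum.inl (Fin.last m)) := by
  rw [bV_inl]; simp [Svec, hvec, dlt_eq]
lemma hC (m : ℕ) : Cvec (m+1) = bV m (Sum.inr (Fin.last m)) := by
  rw [bV_inr]; simp [Cvec, vvec, dlt_eq]
lemma J_inl (m : ℕ) (i : Fin (m+1)) : Jmap (m+1) (bV m (Sum.inl i)) = bV m (Sum.inr i) := by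
  rw [bV_inl, bV_inr]; rfl
lemma J_inr (m : ℕ) (i : Fin (m+1)) : Jmap (m+1) (bV m (Sum.inr i)) = 0 := by
  rw [bV_inr]; rfl
lemma coord_basis (m : ℕ) (x u : ii m) :
    (bV m).coord x (bV m u) = if u = x then 1 else 0 := by
  simp [Module.Basis.coord_apply, Module.Basis.repr_self, Finsupp.single_apply]
noncomputable def mkTri (m : ℕ) (c : ii m → ii m → ii m → ℝ) : Tri (m+1) :=
  ∑ t : ii m × ii m × ii m, c t.1 t.2.1 t.2.2 •
    ((bV m).coord t.1).smulRight (((bV m).coord t.2.1).smulRight ((bV m).coord t.2.2))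
lemma mkTri_apply (m : ℕ) (c : ii m → ii m → ii m → ℝ) (X Y Z : V (m+1)) :
    mkTri m c X Y Z = ∑ t : ii m × ii m × ii m,
      c t.1 t.2.1 t.2.2 * ((bV m).coord t.1 X * ((bV m).coord t.2.1 Y * (bV m).coord t.2.2 Z)) := by
  simp [mkTri, LinearMap.sum_apply, LinearMap.smulRight_apply, smul_eq_mul]
lemma mkTri_basis (m : ℕ) (c : ii m → ii m → ii m → ℝ) (u v w : ii m) :
    mkTri m c (bV m u) (bV m v) (bV m w) = c u v w := by
  rw [mkTri_apply]
  rw [Fintype.sum_prod_type]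
  simp only [coord_basis, Fintype.sum_prod_type, mul_ite, ite_mul, mul_one, mul_zero, one_mul,
    zero_mul, Finset.sum_ite_eq, Finset.mem_univ, if_true]
lemma mkTri_symm12 (m : ℕ) (c : ii m → ii m → ii m → ℝ)
    (h : ∀ x y z, c x y z = c y x z) (X Y Z : V (m+1)) :
    mkTri m c X Y Z = mkTri m c Y X Z := by
  rw [mkTri_apply, mkTri_apply]
  refine Fintype.sum_equiv ⟨fun t => (t.2.1, t.1, t.2.2), fun t => (t.2.1, t.1, t.2.2),
    fun t => rfl, fun t => rfl⟩ _ _ (fun t => ?_)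
  simp only [Equiv.coe_fn_mk]
  rw [h t.1 t.2.1 t.2.2]
  ring
lemma mkTri_symm23 (m : ℕ) (c : ii m → ii m → ii m → ℝ)
    (h : ∀ x y z, c x y z = c x z y) (X Y Z : V (m+1)) :
    mkTri m c X Y Z = mkTri m c X Z Y := by
  rw [mkTri_apply, mkTri_apply]
  refine Fintype.sum_equiv ⟨fun t => (t.1, t.2.2, t.2.1), fun t => (t.1, t.2.2, t.2.1),
    fun t => rfl, fun t => rfl⟩ _ _ (fun t => ?_)
  simp only [Equiv.coe_fn_mk]
  rw [h t.1 t.2.1 t.2.2]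
  ring
abbrev K1 (m : ℕ) := {p : Fin ((m+1)+(m+1)) × Fin ((m+1)+(m+1)) // p.1 ≤ p.2}
abbrev K2 (m : ℕ) := Fin (m+1) × Fin m
abbrev K3 (m : ℕ) := {p : Fin m × Fin m // p.1 ≤ p.2}
abbrev K (m : ℕ) := K1 m ⊕ K2 m ⊕ K3 m
def qe (m : ℕ) : ii m ≃ Fin ((m+1)+(m+1)) := finSumFinEquiv
noncomputable def Fmap (m : ℕ) : (Bil (m+1) × Bil (m+1)) →ₗ[ℝ] (K m → ℝ) where
  toFun P := Sum.elim
    (fun p => P.2 (bV m ((qe m).symm p.1.1)) (bV m ((qe m).symm p.1.2)))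
    (Sum.elim
      (fun k => (P.1 + P.2) (bV m (Sum.inl k.1)) (bV m (Sum.inl k.2.castSucc)))
      (fun k => (P.1 + P.2) (bV m (Sum.inr k.1.1.castSucc)) (bV m (Sum.inl k.1.2.castSucc))))
  map_add' P Q := by
    funext k
    rcases k with k | k | k <;> simp <;> ring
  map_smul' c P := by
    funext k
    rcases k with k | k | k <;> simp <;> ring


lemma arith (s mm t : ℕ) (ht : s + mm = 2*t) :
    (4*s+10*mm+6)/2 + ((s+mm) + (s+mm)/2) = (7*s+13*mm+6)/2 := by omega

lemma card_K (m : ℕ) : Fintype.card (K m) = (7 * (m+1)^2 - (m+1)) / 2 := by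
  have c1 : Fintype.card (K1 m) = (4*(m*m)+10*m+6)/2 := by
    rw [← Fintype.card_congr (Sym2.sortEquiv (α := Fin ((m+1)+(m+1)))), Sym2.card,
      Fintype.card_fin, Nat.choose_two_right]
    have h : (m+1+(m+1)+1) - 1 = 2*m+2 := by omega
    have h2 : (m+1+(m+1)+1) = 2*m+3 := by omega
    rw [h2] at h ⊢
    rw [h]
    congr 1
    ring
  have c3 : Fintype.card (K3 m) = ((m*m)+m)/2 := by
    rw [← Fintype.card_congr (Sym2.sortEquiv (α := Fin m)), Sym2.card,
      Fintype.card_fin, Nat.choose_two_right]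
    have h : (m+1) - 1 = m := by omega
    rw [h]
    congr 1
    ring
  have c2 : Fintype.card (K2 m) = (m*m) + m := by
    simp [Fintype.card_prod, Fintype.card_fin]; ring
  have hcard : Fintype.card (K m) = Fintype.card (K1 m) + (Fintype.card (K2 m) + Fintype.card (K3 m)) := by
    simp [Fintype.card_sum]
  rw [hcard, c1, c2, c3]
  have h7 : 7 * (m+1)^2 = 7*(m*m) + 14*m + 7 := by ring
  rw [h7]
  obtain ⟨t, ht⟩ := Nat.even_mul_succ_self m
  have hmt : m * m + m = 2 * t := by
    have h' : m * m + m = m * (m+1) := by ring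
    rw [h', ht]; omega
  have := arith (m*m) m t hmt
  generalize m*m = s at this hmt ⊢
  omega

variable {m : ℕ}

def zS (m : ℕ) : ii m := Sum.inl (Fin.last m)
def zC (m : ℕ) : ii m := Sum.inr (Fin.last m)

def gB (g : K m → ℝ) (u v : ii m) : ℝ :=
  if h : qe m u ≤ qe m v then g (Sum.inl ⟨(qe m u, qe m v), h⟩)
  else g (Sum.inl ⟨(qe m v, qe m u), le_of_not_ge h⟩)

lemma gB_symm (g : K m → ℝ) (u v : ii m) : gB g u v = gB g v u := by
  unfold gB
  by_cases h1 : qe m u ≤ qe m v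
  · by_cases h2 : qe m v ≤ qe m u
    · obtain rfl : u = v := (qe m).injective (le_antisymm h1 h2)
      rfl
    · rw [dif_pos h1, dif_neg h2]
  · rw [dif_neg h1, dif_pos (le_of_not_ge h1)]

def g2 (g : K m → ℝ) (i j : Fin (m+1)) : ℝ :=
  if hj : (j : ℕ) < m then g (Sum.inr (Sum.inl (i, ⟨(j : ℕ), hj⟩))) else 0

def gg (g : K m → ℝ) (a b : Fin m) : ℝ :=
  if h : a ≤ b then g (Sum.inr (Sum.inr ⟨(a, b), h⟩))
  else g (Sum.inr (Sum.inr ⟨(b, a), le_of_not_ge h⟩))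

lemma gg_symm (g : K m → ℝ) (a b : Fin m) : gg g a b = gg g b a := by
  unfold gg
  by_cases h1 : a ≤ b
  · by_cases h2 : b ≤ a
    · obtain rfl : a = b := le_antisymm h1 h2
      rfl
    · rw [dif_pos h1, dif_neg h2]
  · rw [dif_neg h1, dif_pos (le_of_not_ge h1)]

def g3 (g : K m → ℝ) (i j : Fin (m+1)) : ℝ :=
  if h : (i : ℕ) < m ∧ (j : ℕ) < m then gg g ⟨(i : ℕ), h.1⟩ ⟨(j : ℕ), h.2⟩ else 0

lemma g3_symm (g : K m → ℝ) (i j : Fin (m+1)) : g3 g i j = g3 g j i := by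
  unfold g3
  by_cases hi : (i : ℕ) < m
  · by_cases hj : (j : ℕ) < m
    · rw [dif_pos ⟨hi, hj⟩, dif_pos ⟨hj, hi⟩]
      exact gg_symm g _ _
    · rw [dif_neg (fun h => hj h.2), dif_neg (fun h => hj h.1)]
  · rw [dif_neg (fun h => hi h.1), dif_neg (fun h => hi h.2)]

def s2 (g : K m → ℝ) : ii m → ii m → ℝ
  | Sum.inl _, Sum.inl _ => 0
  | Sum.inl i, Sum.inr j => g2 g i j
  | Sum.inr j, Sum.inl i => g2 g i j
  | Sum.inr i, Sum.inr j => g3 g i j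

lemma s2_symm (g : K m → ℝ) (u v : ii m) : s2 g u v = s2 g v u := by
  cases u <;> cases v <;> simp [s2, g3_symm]

def cc (g : K m → ℝ) (x y z : ii m) : ℝ :=
  if x = zC m then gB g y z else if y = zC m then gB g x z else if z = zC m then gB g x y
  else if x = zS m then s2 g y z else if y = zS m then s2 g x z else if z = zS m then s2 g x y
  else 0

lemma cc_symm12 (g : K m → ℝ) (x y z : ii m) : cc g x y z = cc g y x z := by
  unfold cc
  split_ifs <;> subst_vars <;> first
    | rfl
    | (apply gB_symm)
    | (apply s2_symm)
    | simp_all [zS, zC]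

lemma cc_symm23 (g : K m → ℝ) (x y z : ii m) : cc g x y z = cc g x z y := by
  unfold cc
  split_ifs <;> subst_vars <;> first
    | rfl
    | (apply gB_symm)
    | (apply s2_symm)
    | simp_all [zS, zC]

lemma cc_zC (g : K m → ℝ) (u v : ii m) : cc g u v (zC m) = gB g u v := by
  by_cases h1 : u = zC m
  · subst h1; unfold cc; rw [if_pos rfl]; exact gB_symm g _ _
  · by_cases h2 : v = zC m
    · subst h2; unfold cc; rw [if_neg h1, if_pos rfl]
    · unfold cc; rw [if_neg h1, if_neg h2, if_pos rfl]

lemma zS_ne_zC : zS m ≠ zC m := by simp [zS, zC]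

lemma cc_zS (g : K m → ℝ) (u v : ii m) (hu : u ≠ zC m) (hv : v ≠ zC m) :
    cc g u (zS m) v = s2 g u v := by
  unfold cc
  rw [if_neg hu, if_neg zS_ne_zC, if_neg hv]
  by_cases h : u = zS m
  · subst h; rw [if_pos rfl]
  · rw [if_neg h, if_pos rfl]

lemma Fmap_surj (m : ℕ) :
    Function.Surjective ((Fmap m).comp (sigma3P1Image (m+1)).subtype) := by
  intro g
  set A := mkTri m (cc g) with hAdef
  have hA : ∀ u v w, A (bV m u) (bV m v) (bV m w) = cc g u v w := mkTri_basis m (cc g)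
  have hs1 : ∀ X Y Z, A X Y Z = A Y X Z := mkTri_symm12 m _ (cc_symm12 g)
  have hs2 : ∀ X Y Z, A X Y Z = A X Z Y := mkTri_symm23 m _ (cc_symm23 g)
  set BC : Bil (m+1) := LinearMap.compr₂ A (LinearMap.applyₗ (Cvec (m+1))) with hBCdef
  have hBCa : ∀ X Y, BC X Y = A X Y (Cvec (m+1)) := fun X Y => rfl
  set DD : Bil (m+1) :=
    LinearMap.compl₂ ((LinearMap.applyₗ (Svec (m+1))).comp A) (Jmap (m+1)) with hDDdef
  have hDDa : ∀ X Y, DD X Y = A X (Svec (m+1)) (Jmap (m+1) Y) := fun X Y => rfl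
  have hmem : (DD - BC, BC) ∈ sigma3P1Image (m+1) := by
    refine ⟨A, hs1, hs2, fun X Y => ?_, fun X Y => hBCa X Y⟩
    simp only [LinearMap.sub_apply]
    rw [hDDa, hBCa]
  refine ⟨⟨(DD - BC, BC), hmem⟩, ?_⟩
  funext k
  simp only [LinearMap.comp_apply, Submodule.subtype_apply]
  have hsum : (DD - BC) + BC = DD := sub_add_cancel DD BC
  rcases k with ⟨⟨p1, p2⟩, hp⟩ | ⟨i, j⟩ | ⟨⟨i, j⟩, hij⟩
  · show BC (bV m ((qe m).symm p1)) (bV m ((qe m).symm p2)) = g (Sum.inl ⟨(p1, p2), hp⟩)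
    rw [hBCa, hC, hA, show (Sum.inr (Fin.last m) : ii m) = zC m from rfl, cc_zC]
    unfold gB
    have e1 : qe m ((qe m).symm p1) = p1 := (qe m).apply_symm_apply p1
    have e2 : qe m ((qe m).symm p2) = p2 := (qe m).apply_symm_apply p2
    rw [dif_pos (show qe m ((qe m).symm p1) ≤ qe m ((qe m).symm p2) from by rw [e1, e2]; exact hp)]
    exact congrArg g (congrArg Sum.inl (Subtype.ext (Prod.ext e1 e2)))
  · show ((DD - BC) + BC) (bV m (Sum.inl i)) (bV m (Sum.inl j.castSucc)) =
      g (Sum.inr (Sum.inl (i, j)))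
    rw [hsum, hDDa, hS, J_inl, hA, show (Sum.inl (Fin.last m) : ii m) = zS m from rfl]
    rw [cc_zS _ _ _ (by simp [zC]) (by simpa [zC] using (Fin.castSucc_lt_last j).ne)]
    show g2 g i j.castSucc = _
    unfold g2
    rw [dif_pos (show ((j.castSucc : Fin (m+1)) : ℕ) < m from j.isLt)]
    simp only [Fin.coe_castSucc, Fin.eta]
  · show ((DD - BC) + BC) (bV m (Sum.inr i.castSucc)) (bV m (Sum.inl j.castSucc)) =
      g (Sum.inr (Sum.inr ⟨(i, j), hij⟩))
    rw [hsum, hDDa, hS, J_inl, hA, show (Sum.inl (Fin.last m) : ii m) = zS m from rfl]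
    rw [cc_zS _ _ _ (by simpa [zC] using (Fin.castSucc_lt_last i).ne)
      (by simpa [zC] using (Fin.castSucc_lt_last j).ne)]
    show g3 g i.castSucc j.castSucc = _
    unfold g3
    rw [dif_pos (show ((i.castSucc : Fin (m+1)) : ℕ) < m ∧ ((j.castSucc : Fin (m+1)) : ℕ) < m
      from ⟨i.isLt, j.isLt⟩)]
    unfold gg
    rw [dif_pos (show (⟨((i.castSucc : Fin (m+1)) : ℕ), i.isLt⟩ : Fin m) ≤
      ⟨((j.castSucc : Fin (m+1)) : ℕ), j.isLt⟩ from hij)]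
    simp only [Fin.coe_castSucc, Fin.eta]

instance instACGDual (n : ℕ) : AddCommGroup (V n →ₗ[ℝ] ℝ) := LinearMap.addCommGroup
instance instACGBil (n : ℕ) : AddCommGroup (Bil n) := LinearMap.addCommGroup

lemma Fmap_inj (m : ℕ) :
    Function.Injective ((Fmap m).comp (sigma3P1Image (m+1)).subtype) := by
  rw [injective_iff_map_eq_zero]
  rintro ⟨P, hP⟩ hP0
  obtain ⟨A, h1, h2, hBS, hBC⟩ := hP
  refine Subtype.ext ?_
  show P = 0
  simp only [LinearMap.comp_apply, Submodule.subtype_apply] at hP0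
  have hBsymm : ∀ X Y, P.2 X Y = P.2 Y X := fun X Y => by rw [hBC, hBC, h1]
  have hB0 : ∀ u v, P.2 (bV m u) (bV m v) = 0 := by
    intro u v
    rcases le_total (qe m u) (qe m v) with h | h
    · have := congrFun hP0 (Sum.inl ⟨(qe m u, qe m v), h⟩)
      simpa [Fmap] using this
    · have := congrFun hP0 (Sum.inl ⟨(qe m v, qe m u), h⟩)
      rw [hBsymm]
      simpa [Fmap] using this
  have hD : ∀ X Y, (P.1 + P.2) X Y = A X (Svec (m+1)) (Jmap (m+1) Y) := by
    intro X Y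
    simp only [LinearMap.add_apply]
    rw [hBS, hBC]
    ring
  have ha3 : ∀ X Y Z, A X Y Z = A Z Y X := fun X Y Z => by rw [h2, h1, h2]
  have hD0 : ∀ u v, (P.1 + P.2) (bV m u) (bV m v) = 0 := by
    intro u v
    rw [hD]
    cases v with
    | inr j => rw [J_inr]; simp
    | inl j =>
      rw [J_inl, hS]
      by_cases hj : j = Fin.last m
      · subst hj
        rw [show bV m (Sum.inr (Fin.last m)) = Cvec (m+1) from (hC m).symm, ← hBC]
        exact hB0 _ _
      · have hjlt : (j : ℕ) < m := by
          have := j.isLt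
          rw [Fin.ext_iff, Fin.val_last] at hj
          omega
        have hj' : (⟨(j : ℕ), hjlt⟩ : Fin m).castSucc = j := by
          apply Fin.ext
          rfl
        cases u with
        | inl i =>
          have h0 := congrFun hP0 (Sum.inr (Sum.inl (i, ⟨(j : ℕ), hjlt⟩)))
          simp only [Fmap, LinearMap.coe_mk, AddHom.coe_mk, Sum.elim_inr, Sum.elim_inl,
            Pi.zero_apply] at h0
          rw [hD, J_inl, hS, hj'] at h0
          exact h0
        | inr i =>
          by_cases hi : i = Fin.last m
          · subst hi
            rw [h1, h2]
            rw [show bV m (Sum.inr (Fin.last m)) = Cvec (m+1) from (hC m).symm, ← hBC]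
            exact hB0 _ _
          · have hilt : (i : ℕ) < m := by
              have := i.isLt
              rw [Fin.ext_iff, Fin.val_last] at hi
              omega
            have hi' : (⟨(i : ℕ), hilt⟩ : Fin m).castSucc = i := by
              apply Fin.ext
              rfl
            rcases le_total (⟨(i : ℕ), hilt⟩ : Fin m) ⟨(j : ℕ), hjlt⟩ with hle | hle
            · have h0 := congrFun hP0 (Sum.inr (Sum.inr ⟨(⟨(i : ℕ), hilt⟩, ⟨(j : ℕ), hjlt⟩), hle⟩))
              simp only [Fmap, LinearMap.coe_mk, AddHom.coe_mk, Sum.elim_inr, Sum.elim_inl,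
                Pi.zero_apply] at h0
              rw [hD, J_inl, hS, hj', hi'] at h0
              exact h0
            · have h0 := congrFun hP0 (Sum.inr (Sum.inr ⟨(⟨(j : ℕ), hjlt⟩, ⟨(i : ℕ), hilt⟩), hle⟩))
              simp only [Fmap, LinearMap.coe_mk, AddHom.coe_mk, Sum.elim_inr, Sum.elim_inl,
                Pi.zero_apply] at h0
              rw [hD, J_inl, hS, hj', hi'] at h0
              rw [ha3]
              exact h0
  have hP2 : P.2 = 0 := by
    apply (bV m).ext
    intro u
    apply (bV m).ext
    intro v
    simpa using hB0 u v
  have hP1 : P.1 = 0 := by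
    apply (bV m).ext
    intro u
    apply (bV m).ext
    intro v
    have hsum := hD0 u v
    simp only [LinearMap.add_apply] at hsum
    have hb := hB0 u v
    simp only [LinearMap.zero_apply]
    linarith
  exact Prod.ext hP1 hP2

end RankAux
end

/-- the prolonged symbol `σ₃(P₁)` of the Rapcsák operator has rank
`(7n² − n)/2`. -/
theorem rank_sigma3P1 (n : ℕ) (hn : 1 ≤ n) :
    Module.finrank ℝ (sigma3P1Image n) = (7 * n ^ 2 - n) / 2 := by
  obtain ⟨m, rfl⟩ : ∃ m, n = m + 1 := ⟨n - 1, by omega⟩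
  have hbij : Function.Bijective ((RankAux.Fmap m).comp (sigma3P1Image (m+1)).subtype) :=
    ⟨RankAux.Fmap_inj m, RankAux.Fmap_surj m⟩
  rw [LinearEquiv.finrank_eq (LinearEquiv.ofBijective _ hbij),
    Module.finrank_fintype_fun_eq_card, RankAux.card_K]
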